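/- For every positive integer N and x in [-1,1], \sum_{n=0}^{N-1}(2n+1)P_n(x)^2 = (1-x^2)(P_N'(x))^2 + N^2 P_N(x)^2, where P_n is the Legendre polynomial of degree n. -/
import Mathlib


noncomputable def legendreP : ℕ → ℝ → ℝ
  | 0, _ => 1
  | 1, x => x
  | (n + 2), x =>
      ((2 * (n : ℝ) + 3) * x * legendreP (n + 1) x - ((n : ℝ) + 1) * legendreP n x) /
        ((n : ℝ) + 2)

lemma legendreP_key : ∀ n : ℕ,
    Differentiable ℝ (legendreP n) ∧ Differentiable ℝ (legendreP (n+1)) ∧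
    (∀ x : ℝ, deriv (legendreP (n+1)) x = x * deriv (legendreP n) x + ((n:ℝ)+1) * legendreP n x) ∧
    (∀ x : ℝ, (1 - x^2) * deriv (legendreP n) x = ((n:ℝ)+1) * (x * legendreP n x - legendreP (n+1) x)) := by
  intro n
  induction n with
  | zero =>
    have h0 : legendreP 0 = fun _ : ℝ => (1:ℝ) := by funext x; rfl
    have h1 : legendreP 1 = fun x : ℝ => x := by funext x; rfl
    refine ⟨by rw [h0]; exact differentiable_const 1, by rw [h1]; exact differentiable_id, ?_, ?_⟩
    · intro x; rw [h0, h1]; simp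
    · intro x; rw [h0, h1]; simp
  | succ n ih =>
    obtain ⟨hd0, hd1, hA, hB⟩ := ih
    have hn2 : ((n:ℝ)+2) ≠ 0 := by positivity
    have hder : ∀ x : ℝ, HasDerivAt (legendreP (n+2))
        (((2*(n:ℝ)+3) * (1 * legendreP (n+1) x + x * deriv (legendreP (n+1)) x)
          - ((n:ℝ)+1) * deriv (legendreP n) x) / ((n:ℝ)+2)) x := by
      intro x
      have h1 : HasDerivAt (fun y : ℝ => y * legendreP (n+1) y)
          (1 * legendreP (n+1) x + x * deriv (legendreP (n+1)) x) x :=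
        (hasDerivAt_id x).mul (hd1 x).hasDerivAt
      have h2 := ((h1.const_mul (2*(n:ℝ)+3)).sub ((hd0 x).hasDerivAt.const_mul ((n:ℝ)+1))).div_const ((n:ℝ)+2)
      have heq : legendreP (n+2) = fun y : ℝ =>
          ((2*(n:ℝ)+3) * (y * legendreP (n+1) y) - ((n:ℝ)+1) * legendreP n y) / ((n:ℝ)+2) := by
        funext y
        rw [show legendreP (n+2) y = ((2*(n:ℝ)+3) * y * legendreP (n+1) y
          - ((n:ℝ)+1) * legendreP n y) / ((n:ℝ)+2) from rfl]
        ring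
      rw [heq]
      exact h2
    have hd2 : Differentiable ℝ (legendreP (n+2)) := fun x => (hder x).differentiableAt
    have hderiv2 : ∀ x : ℝ, deriv (legendreP (n+2)) x =
        ((2*(n:ℝ)+3) * (1 * legendreP (n+1) x + x * deriv (legendreP (n+1)) x)
          - ((n:ℝ)+1) * deriv (legendreP n) x) / ((n:ℝ)+2) := fun x => (hder x).deriv
    have hA' : ∀ x : ℝ, deriv (legendreP (n+2)) x =
        x * deriv (legendreP (n+1)) x + ((n:ℝ)+1+1) * legendreP (n+1) x := by
      intro x
      rw [hderiv2 x, div_eq_iff hn2]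
      linear_combination ((n:ℝ)+1) * x * (hA x) - ((n:ℝ)+1) * (hB x)
    refine ⟨hd1, hd2, by exact_mod_cast hA', ?_⟩
    intro x
    have hrec : legendreP (n+2) x =
        ((2*(n:ℝ)+3) * x * legendreP (n+1) x - ((n:ℝ)+1) * legendreP n x) / ((n:ℝ)+2) := rfl
    rw [hA x, hrec]
    field_simp
    push_cast
    linear_combination ((n:ℝ)+2) * x * (hB x)
theorem christoffel_legendre_closed_form (N : ℕ) (hN : 1 ≤ N) (x : ℝ)
    (hx : x ∈ Set.Icc (-1 : ℝ) 1) :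
    ∑ n ∈ Finset.range N, (2 * (n : ℝ) + 1) * (legendreP n x) ^ 2 =
      (1 - x ^ 2) * (deriv (legendreP N) x) ^ 2 + (N : ℝ) ^ 2 * (legendreP N x) ^ 2 := by
  induction N, hN using Nat.le_induction with
  | base =>
    have h1 : legendreP 1 = fun x : ℝ => x := by funext x; rfl
    simp [legendreP, h1]
  | succ N hN ih =>
    rw [Finset.sum_range_succ, ih]
    obtain ⟨-, -, hA, hB⟩ := legendreP_key N
    push_cast
    linear_combination (-(1 - x^2) * (deriv (legendreP (N+1)) x + x * deriv (legendreP N) x + ((N:ℝ)+1) * legendreP N x)) * (hA x) + (-(((N:ℝ)+1) * legendreP (N+1) x + ((N:ℝ)+1) * x * legendreP N x - (1-x^2) * deriv (legendreP N) x)) * (hB x)
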